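/- arXiv:0908.2132 — 4 statements merged into one kernel-verified Lean document; each statement's English description precedes it below -/
import Mathlib

section
/- Let S ⊆ ℝⁿ be a regular k-simplex and η: ℝⁿ → ℝᵐ an affine map with integer coefficients (η(x) = Mx + b with M an integer matrix and b an integer vector) that restricts to a bijection of S onto a k-simplex S' ⊆ ℝᵐ whose inverse is also the restriction of an affine map with integer coefficients. Then S' is a regular k-simplex. -/
open scoped BigOperators

/-- The least common denominator of a rational point `v ∈ ℚⁿ`. -/
def den {n : ℕ} (v : Fin n → ℚ) : ℕ :=
  Finset.univ.lcm fun i => (v i).den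

/-- The homogeneous correspondent `ṽ = den(v)·(v,1) ∈ ℤ^{n+1}` of a rational point `v`. -/
def homc {n : ℕ} (v : Fin n → ℚ) : Fin (n + 1) → ℤ :=
  fun j => if h : (j : ℕ) < n then ((den v : ℚ) * v ⟨j, h⟩).num else (den v : ℤ)

/-- A finite family of rational points in `ℚⁿ` is regular if their homogeneous
correspondents form part of a basis of the free abelian group `ℤ^{n+1}`. -/
def IsRegularPts {ι : Type*} [Fintype ι] {n : ℕ} (v : ι → (Fin n → ℚ)) : Prop :=
  ∃ (b : Module.Basis (Fin (n + 1)) ℤ (Fin (n + 1) → ℤ)) (f : ι → Fin (n + 1)),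
    Function.Injective f ∧ ∀ i, b (f i) = homc (v i)

/-- The affine map `x ↦ Mx + b` with integer coefficients, on real points. -/
def affR {m n : ℕ} (M : Matrix (Fin m) (Fin n) ℤ) (b : Fin m → ℤ)
    (x : Fin n → ℝ) : Fin m → ℝ :=
  fun j => (∑ i, (M j i : ℝ) * x i) + (b j : ℝ)

/-- The affine map `x ↦ Mx + b` with integer coefficients, on rational points. -/
def affQ {m n : ℕ} (M : Matrix (Fin m) (Fin n) ℤ) (b : Fin m → ℤ)
    (x : Fin n → ℚ) : Fin m → ℚ :=
  fun j => (∑ i, (M j i : ℚ) * x i) + (b j : ℚ)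

/-- A rational point of `ℚⁿ`, viewed in `ℝⁿ`. -/
def toR {n : ℕ} (q : Fin n → ℚ) : Fin n → ℝ := fun i => (q i : ℝ)

/-! ### Auxiliary lemmas -/

lemma den_ne_zero {n : ℕ} (x : Fin n → ℚ) : den x ≠ 0 := by
  intro h
  rcases Finset.lcm_eq_zero_iff.mp h with ⟨i, _, hi⟩
  exact (x i).den_nz hi

lemma exists_int_of_den_dvd {q : ℚ} {D : ℕ} (h : q.den ∣ D) :
    ∃ z : ℤ, (z : ℚ) = (D : ℚ) * q := by
  obtain ⟨c, hc⟩ := h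
  refine ⟨q.num * c, ?_⟩
  have hq : (q.den : ℚ) * q = q.num := by
    rw [mul_comm, Rat.mul_den_eq_num]
  push_cast
  rw [hc]
  push_cast
  rw [mul_comm (q.den : ℚ) (c : ℚ), mul_assoc, hq, mul_comm]

lemma den_dvd_of_int {q : ℚ} {D : ℕ} (hD : D ≠ 0) {z : ℤ} (h : (z : ℚ) = (D : ℚ) * q) :
    q.den ∣ D := by
  have hD' : ((D : ℤ) : ℚ) ≠ 0 := by exact_mod_cast hD
  have hq : q = (z : ℚ) / ((D : ℤ) : ℚ) := by rw [h]; field_simp; simp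
  have := Rat.den_dvd z (D : ℤ)
  rw [Rat.divInt_eq_div, ← hq] at this
  exact_mod_cast this

lemma den_coord_dvd {n : ℕ} (x : Fin n → ℚ) (i : Fin n) : (x i).den ∣ den x :=
  Finset.dvd_lcm (Finset.mem_univ i)

lemma den_affQ_dvd {m n : ℕ} (M : Matrix (Fin m) (Fin n) ℤ) (b : Fin m → ℤ) (x : Fin n → ℚ) :
    den (affQ M b x) ∣ den x := by
  apply Finset.lcm_dvd
  intro j _
  choose z hz using fun i => exists_int_of_den_dvd (den_coord_dvd x i)
  apply den_dvd_of_int (den_ne_zero x) (z := (∑ i, M j i * z i) + b j * (den x : ℤ))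
  push_cast
  show _ = (den x : ℚ) * ((∑ i, (M j i : ℚ) * x i) + (b j : ℚ))
  have : ∀ i : Fin n, (M j i : ℚ) * (z i : ℚ) = (den x : ℚ) * ((M j i : ℚ) * x i) := by
    intro i; rw [hz]; ring
  rw [Finset.sum_congr rfl (fun i _ => this i), ← Finset.mul_sum]
  ring

lemma homc_lt {n : ℕ} (x : Fin n → ℚ) (j : Fin (n+1)) (h : (j : ℕ) < n) :
    (homc x j : ℚ) = (den x : ℚ) * x ⟨j, h⟩ := by
  obtain ⟨z, hz⟩ := exists_int_of_den_dvd (den_coord_dvd x ⟨j, h⟩)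
  rw [homc, dif_pos h, ← hz, Rat.num_intCast, hz]

lemma homc_castSucc {n : ℕ} (x : Fin n → ℚ) (i : Fin n) :
    (homc x i.castSucc : ℚ) = (den x : ℚ) * x i := by
  rw [homc_lt x i.castSucc i.isLt]
  congr 1

lemma homc_last {n : ℕ} (x : Fin n → ℚ) : homc x (Fin.last n) = (den x : ℤ) := by
  rw [homc, dif_neg (by simp [Fin.last])]

/-- The homogeneous `(m+1) × (n+1)` matrix `[[M, b], [0, 1]]` of the affine map `x ↦ Mx + b`. -/
def Amat {m n : ℕ} (M : Matrix (Fin m) (Fin n) ℤ) (b : Fin m → ℤ) :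
    Matrix (Fin (m+1)) (Fin (n+1)) ℤ :=
  fun j i => if hj : (j : ℕ) < m then (if hi : (i : ℕ) < n then M ⟨j, hj⟩ ⟨i, hi⟩ else b ⟨j, hj⟩)
    else (if (i : ℕ) < n then 0 else 1)

lemma Amat_mulVec_homc {m n : ℕ} (M : Matrix (Fin m) (Fin n) ℤ) (b : Fin m → ℤ)
    (x : Fin n → ℚ) (hden : den (affQ M b x) = den x) :
    (Amat M b).mulVec (homc x) = homc (affQ M b x) := by
  funext j
  have : ((Matrix.mulVec (Amat M b) (homc x) j : ℤ) : ℚ) = ((homc (affQ M b x) j : ℤ) : ℚ) := by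
    rw [Matrix.mulVec, dotProduct]
    push_cast
    rw [Fin.sum_univ_castSucc]
    induction j using Fin.lastCases with
    | last =>
      have hA : ∀ i : Fin n, (Amat M b (Fin.last m) i.castSucc : ℚ) = 0 := by
        intro i
        simp [Amat, Fin.last, i.isLt]
      have hA' : (Amat M b (Fin.last m) (Fin.last n) : ℚ) = 1 := by
        simp [Amat, Fin.last]
      rw [Finset.sum_congr rfl (fun i _ => by rw [hA i, zero_mul]), Finset.sum_const_zero,
        hA', one_mul, homc_last, homc_last, hden]
      ring
    | cast j' =>
      have hj' : ((j'.castSucc : Fin (m+1)) : ℕ) < m := j'.isLt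
      have hA : ∀ i : Fin n, Amat M b j'.castSucc i.castSucc = M j' i := by
        intro i
        simp [Amat, hj', i.isLt]
      have hA' : Amat M b j'.castSucc (Fin.last n) = b j' := by
        simp [Amat, hj', Fin.last]
      rw [homc_lt (affQ M b x) j'.castSucc hj', hden]
      have : (affQ M b x) ⟨(j'.castSucc : ℕ), hj'⟩ = (∑ i, (M j' i : ℚ) * x i) + (b j' : ℚ) := by
        simp [affQ]
      rw [this, homc_last, hA']
      rw [Finset.sum_congr rfl (fun i _ => by rw [hA i, homc_castSucc])]
      push_cast
      rw [mul_add, Finset.mul_sum]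
      congr 1
      · exact Finset.sum_congr rfl (fun i _ => by ring)
      · ring
  exact_mod_cast this

lemma toR_injective {n : ℕ} : Function.Injective (toR (n := n)) := by
  intro x y h
  funext i
  exact Rat.cast_injective (congrFun h i)

lemma affR_toR {m n : ℕ} (M : Matrix (Fin m) (Fin n) ℤ) (b : Fin m → ℤ) (x : Fin n → ℚ) :
    affR M b (toR x) = toR (affQ M b x) := by
  funext j
  simp only [affR, affQ, toR]
  push_cast
  rfl

/-- Abstract splitting lemma: if a family `wv` of vectors in `ℤ^{m+1}` is mapped by a linear
map `ψ` to (distinct) members of a basis, then `wv` extends to a basis of `ℤ^{m+1}`. -/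
lemma extend_basis {n m k : ℕ} (bz : Module.Basis (Fin (n + 1)) ℤ (Fin (n + 1) → ℤ))
    (f : Fin (k+1) → Fin (n+1)) (hf : Function.Injective f)
    (wv : Fin (k+1) → (Fin (m+1) → ℤ))
    (ψ : (Fin (m+1) → ℤ) →ₗ[ℤ] (Fin (n+1) → ℤ))
    (h2 : ∀ i, ψ (wv i) = bz (f i)) :
    ∃ (B : Module.Basis (Fin (m + 1)) ℤ (Fin (m + 1) → ℤ)) (f' : Fin (k+1) → Fin (m + 1)),
      Function.Injective f' ∧ ∀ i, B (f' i) = wv i := by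
  classical
  set u : (Fin (k+1) → ℤ) →ₗ[ℤ] (Fin (m+1) → ℤ) :=
    Fintype.linearCombination ℤ wv with hu
  have hu_apply : ∀ i, u (Pi.basisFun ℤ (Fin (k+1)) i) = wv i := by
    intro i
    rw [hu, Fintype.linearCombination_apply]
    simp [Pi.basisFun_apply, Pi.single_apply]
  set p : (Fin (m+1) → ℤ) →ₗ[ℤ] (Fin (k+1) → ℤ) :=
    LinearMap.pi (fun i => (bz.coord (f i)) ∘ₗ ψ) with hp
  have hpu : ∀ c, p (u c) = c := by
    have : p ∘ₗ u = LinearMap.id := by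
      apply (Pi.basisFun ℤ (Fin (k+1))).ext
      intro i
      funext j
      simp only [LinearMap.comp_apply, LinearMap.id_apply, hu_apply]
      rw [hp]
      simp only [LinearMap.pi_apply, LinearMap.comp_apply, h2 i]
      rw [Module.Basis.coord_apply, Module.Basis.repr_self]
      simp [Finsupp.single_apply, Pi.basisFun_apply, Pi.single_apply, hf.eq_iff, eq_comm]
    intro c; exact DFunLike.congr_fun this c
  have hu_inj : Function.Injective u := Function.LeftInverse.injective hpu
  set F : (Fin (m+1) → ℤ) →ₗ[ℤ] (LinearMap.range u) :=
    (u ∘ₗ p).codRestrict (LinearMap.range u) (fun x => ⟨p x, rfl⟩) with hF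
  have hFproj : ∀ x : LinearMap.range u, F x = x := by
    rintro ⟨_, c, rfl⟩
    apply Subtype.ext
    show u (p (u c)) = u c
    rw [hpu]
  have hcompl : IsCompl (LinearMap.range u) (LinearMap.ker F) :=
    LinearMap.isCompl_of_proj hFproj
  set b1 : Module.Basis (Fin (k+1)) ℤ (LinearMap.range u) :=
    (Pi.basisFun ℤ (Fin (k+1))).map (LinearEquiv.ofInjective u hu_inj)
  set b2 := Module.Free.chooseBasis ℤ (LinearMap.ker F)
  set B0 := (b1.prod b2).map (Submodule.prodEquivOfIsCompl _ _ hcompl)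
  set e := B0.indexEquiv (Pi.basisFun ℤ (Fin (m+1)))
  refine ⟨B0.reindex e, e ∘ Sum.inl, e.injective.comp Sum.inl_injective, ?_⟩
  intro i
  rw [Function.comp_apply, Module.Basis.reindex_apply, Equiv.symm_apply_apply]
  show (Submodule.prodEquivOfIsCompl _ _ hcompl) ((b1.prod b2) (Sum.inl i)) = wv i
  rw [Module.Basis.prod_apply]
  simp only [Sum.elim_inl, LinearMap.coe_inl, Function.comp_apply]
  rw [Submodule.coe_prodEquivOfIsCompl']
  simp only [b1, Module.Basis.map_apply, LinearEquiv.ofInjective_apply]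
  simpa using hu_apply i

/-- If `S ⊆ ℝⁿ` is a regular `k`-simplex and `η(x) = Mx + b` is an affine map with integer
coefficients which restricts to a bijection of `S` onto a `k`-simplex `S' ⊆ ℝᵐ` whose
inverse is also the restriction of an affine map with integer coefficients, then `S'`
(the simplex on the image vertices) is regular. -/
theorem image_of_regular_simplex_regular {n m k : ℕ}
    (v : Fin (k + 1) → (Fin n → ℚ)) (hreg : IsRegularPts v)
    (M : Matrix (Fin m) (Fin n) ℤ) (b : Fin m → ℤ)
    (M' : Matrix (Fin n) (Fin m) ℤ) (b' : Fin n → ℤ)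
    (hinv : ∀ x ∈ convexHull ℝ (Set.range fun i => toR (v i)),
      affR M' b' (affR M b x) = x)
    (hind : AffineIndependent ℚ fun i => affQ M b (v i)) :
    IsRegularPts (fun i => affQ M b (v i)) := by
  classical
  obtain ⟨bz, f, hf, hbz⟩ := hreg
  set w : Fin (k+1) → (Fin m → ℚ) := fun i => affQ M b (v i) with hw
  have hinvQ : ∀ i, affQ M' b' (w i) = v i := by
    intro i
    have hmem : toR (v i) ∈ convexHull ℝ (Set.range fun i => toR (v i)) :=
      subset_convexHull ℝ _ ⟨i, rfl⟩
    have h := hinv (toR (v i)) hmem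
    rw [affR_toR, affR_toR] at h
    exact toR_injective h
  have hden : ∀ i, den (w i) = den (v i) := by
    intro i
    refine Nat.dvd_antisymm (den_affQ_dvd M b (v i)) ?_
    have := den_affQ_dvd M' b' (w i)
    rwa [hinvQ i] at this
  have h2 : ∀ i, (Amat M' b').mulVecLin (homc (w i)) = bz (f i) := by
    intro i
    rw [Matrix.mulVecLin_apply,
      Amat_mulVec_homc M' b' (w i) (by rw [hinvQ i]; exact (hden i).symm), hinvQ i, hbz i]
  obtain ⟨B, f', hf', hB⟩ := extend_basis bz f hf (fun i => homc (w i))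
    ((Amat M' b').mulVecLin) h2
  exact ⟨B, f', hf', hB⟩
end

section
/- Let P ⊆ [0,1]ⁿ be a rational polyhedron, and let f, g ∈ M(P) with f, g ≥ 0. If there exists a finite simplicial complex Δ with rational vertices whose support is P such that both f and g are affine on each simplex of Δ, and if f⁻¹(0) ⊇ g⁻¹(0), then there exists a nonnegative integer m such that f ≤ m·g on P. -/
open scoped BigOperators

/-- `f` belongs to `M([0,1]ⁿ)`: `f` is continuous on the `n`-cube and there are finitely
many affine functions with integer coefficients such that at every point of the cube `f`
agrees with one of them. -/
def McNFun (n : ℕ) (f : (Fin n → ℝ) → ℝ) : Prop :=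
  ContinuousOn f (Set.Icc 0 1) ∧
  ∃ S : Finset ((Fin n → ℤ) × ℤ), ∀ x ∈ Set.Icc (0 : Fin n → ℝ) 1,
    ∃ p ∈ S, f x = (∑ i, (p.1 i : ℝ) * x i) + (p.2 : ℝ)

/-- `f` is affine on the (real) convex hull of the finite set `T` of rational points. -/
def AffOnSimplex {n : ℕ} (f : (Fin n → ℝ) → ℝ) (T : Finset (Fin n → ℚ)) : Prop :=
  ∃ (c : Fin n → ℝ) (d : ℝ), ∀ x ∈ convexHull ℝ (toR '' (T : Set (Fin n → ℚ))),
    f x = (∑ i, c i * x i) + d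

/-- Let `P ⊆ [0,1]ⁿ` be a rational polyhedron, triangulated by a finite rational
simplicial complex `Δ` on each of whose simplexes both `f, g ∈ M(P)` are affine. If
`f, g ≥ 0` on `P` and the zeroset of `g` is contained in the zeroset of `f`, then
`f ≤ m·g` on `P` for some nonnegative integer `m`. -/
theorem exists_mul_dominating {n : ℕ} (P : Set (Fin n → ℝ)) (f g : (Fin n → ℝ) → ℝ)
    (hPc : P ⊆ Set.Icc 0 1)
    (hf : McNFun n f) (hg : McNFun n g)
    (Δ : Finset (Finset (Fin n → ℚ)))
    (hP : P = ⋃ T ∈ Δ, convexHull ℝ (toR '' (T : Set (Fin n → ℚ))))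
    (hfaff : ∀ T ∈ Δ, AffOnSimplex f T) (hgaff : ∀ T ∈ Δ, AffOnSimplex g T)
    (hf0 : ∀ x ∈ P, 0 ≤ f x) (hg0 : ∀ x ∈ P, 0 ≤ g x)
    (hz : ∀ x ∈ P, g x = 0 → f x = 0) :
    ∃ m : ℕ, ∀ x ∈ P, f x ≤ (m : ℝ) * g x := by
  classical
  set V : Finset (Fin n → ℚ) := Δ.biUnion id with hV
  have hvP : ∀ v ∈ V, toR v ∈ P := by
    intro v hv
    simp only [hV, Finset.mem_biUnion, id] at hv
    obtain ⟨T, hT, hvT⟩ := hv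
    rw [hP]
    exact Set.mem_biUnion hT (subset_convexHull ℝ _ ⟨v, hvT, rfl⟩)
  set m : ℕ := V.sup (fun v => ⌈f (toR v) / g (toR v)⌉₊) with hm
  have key : ∀ v ∈ V, f (toR v) ≤ (m : ℝ) * g (toR v) := by
    intro v hv
    have hgv : 0 ≤ g (toR v) := hg0 _ (hvP v hv)
    rcases eq_or_lt_of_le hgv with h0 | hpos
    · rw [hz _ (hvP v hv) h0.symm, ← h0, mul_zero]
    · have h1 : f (toR v) / g (toR v) ≤ (⌈f (toR v) / g (toR v)⌉₊ : ℝ) := Nat.le_ceil _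
      have hle : (⌈f (toR v) / g (toR v)⌉₊ : ℕ) ≤ m := by
        rw [hm]
        exact Finset.le_sup (f := fun w => ⌈f (toR w) / g (toR w)⌉₊) hv
      calc f (toR v) = (f (toR v) / g (toR v)) * g (toR v) := by field_simp
        _ ≤ (⌈f (toR v) / g (toR v)⌉₊ : ℝ) * g (toR v) :=
            mul_le_mul_of_nonneg_right h1 hgv
        _ ≤ (m : ℝ) * g (toR v) := by
            apply mul_le_mul_of_nonneg_right _ hgv
            exact_mod_cast hle
  refine ⟨m, ?_⟩
  intro x hx
  have hx' := hx
  rw [hP] at hx'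
  simp only [Set.mem_iUnion] at hx'
  obtain ⟨T, hT, hxT⟩ := hx'
  obtain ⟨c, d, hc⟩ := hfaff T hT
  obtain ⟨c', d', hc'⟩ := hgaff T hT
  have hlin : IsLinearMap ℝ (fun y : Fin n → ℝ => ∑ i, (c i - (m : ℝ) * c' i) * y i) := by
    constructor
    · intro a b
      rw [← Finset.sum_add_distrib]
      exact Finset.sum_congr rfl fun i _ => by simp [Pi.add_apply]; ring
    · intro t a
      rw [smul_eq_mul, Finset.mul_sum]
      exact Finset.sum_congr rfl fun i _ => by simp [Pi.smul_apply, smul_eq_mul]; ring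
  have hsum : ∀ y : Fin n → ℝ, (∑ i, (c i - (m : ℝ) * c' i) * y i)
      = (∑ i, c i * y i) - (m : ℝ) * ∑ i, c' i * y i := by
    intro y
    rw [Finset.mul_sum, ← Finset.sum_sub_distrib]
    exact Finset.sum_congr rfl fun i _ => by ring
  have hconv : Convex ℝ {y : Fin n → ℝ |
      (∑ i, (c i - (m : ℝ) * c' i) * y i) ≤ (m : ℝ) * d' - d} :=
    convex_halfSpace_le hlin _
  have hsub : convexHull ℝ (toR '' (T : Set (Fin n → ℚ)))
      ⊆ {y : Fin n → ℝ | (∑ i, (c i - (m : ℝ) * c' i) * y i) ≤ (m : ℝ) * d' - d} := by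
    apply convexHull_min _ hconv
    rintro y ⟨v, hvT, rfl⟩
    have hyhull : toR v ∈ convexHull ℝ (toR '' (T : Set (Fin n → ℚ))) :=
      subset_convexHull ℝ _ ⟨v, hvT, rfl⟩
    have hvV : v ∈ V := by
      simp only [hV, Finset.mem_biUnion, id]
      exact ⟨T, hT, hvT⟩
    have h1 := key v hvV
    have h2 := hc (toR v) hyhull
    have h3 := hc' (toR v) hyhull
    have h4 := hsum (toR v)
    simp only [Set.mem_setOf_eq]
    rw [h2, h3] at h1
    linarith [h4]
  have hx2 := hsub hxT
  simp only [Set.mem_setOf_eq] at hx2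
  rw [hc x hxT, hc' x hxT]
  have := hsum x
  linarith
end

section
/- Let I be an ℓ-ideal of M(P), where P ⊆ [0,1]ⁿ is a rational polyhedron, and suppose both f and g admit a common rational triangulation of P on which they are affine. Then for every f ∈ M(P): f ∈ I if and only if there exists g ∈ I with f⁻¹(0) ⊇ g⁻¹(0). -/
open scoped BigOperators

/-- Rational polyhedra: finite unions of convex hulls of finite sets of rational points. -/
def IsRatPoly {n : ℕ} (P : Set (Fin n → ℝ)) : Prop :=
  ∃ F : Finset (Finset (Fin n → ℚ)),
    P = ⋃ T ∈ F, convexHull ℝ (toR '' (T : Set (Fin n → ℚ)))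

/-- `f` belongs to `M(P)`: `f` is continuous on `P` and at every point of `P` it agrees
with one of finitely many affine functions with integer coefficients (i.e. `f` is the
restriction to `P` of a function of `M([0,1]ⁿ)`). -/
def McNP {n : ℕ} (P : Set (Fin n → ℝ)) (f : (Fin n → ℝ) → ℝ) : Prop :=
  ContinuousOn f P ∧
  ∃ S : Finset ((Fin n → ℤ) × ℤ), ∀ x ∈ P,
    ∃ p ∈ S, f x = (∑ i, (p.1 i : ℝ) * x i) + (p.2 : ℝ)

/-- `M(P)` is closed under absolute value. -/
private lemma mcnp_abs {n : ℕ} {P : Set (Fin n → ℝ)} {g : (Fin n → ℝ) → ℝ}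
    (hg : McNP P g) : McNP P (fun x => |g x|) := by
  classical
  obtain ⟨hc, S, hS⟩ := hg
  refine ⟨hc.abs, S ∪ S.image (fun p => (-p.1, -p.2)), ?_⟩
  intro x hx
  obtain ⟨p, hp, he⟩ := hS x hx
  rcases le_or_gt 0 (g x) with h | h
  · exact ⟨p, Finset.mem_union_left _ hp, by show |g x| = _; rw [abs_of_nonneg h, he]⟩
  · refine ⟨(-p.1, -p.2), Finset.mem_union_right _ (Finset.mem_image_of_mem _ hp), ?_⟩
    show |g x| = _
    rw [abs_of_neg h, he]
    push_cast [Pi.neg_apply]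
    rw [neg_add]
    congr 1
    rw [← Finset.sum_neg_distrib]
    exact Finset.sum_congr rfl fun i _ => by ring

/-- Evaluating an affine function at a convex combination. -/
private lemma affine_comb {n : ℕ} (c : Fin n → ℝ) (d : ℝ) (s : Finset (Fin n → ℝ))
    (w : (Fin n → ℝ) → ℝ) (hw : ∑ y ∈ s, w y = 1) :
    (∑ i, c i * (∑ y ∈ s, w y • y) i) + d = ∑ y ∈ s, w y * ((∑ i, c i * y i) + d) := by
  have h1 : ∀ i, (∑ y ∈ s, w y • y) i = ∑ y ∈ s, w y * y i := by
    intro i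
    rw [Finset.sum_apply]
    exact Finset.sum_congr rfl fun y _ => rfl
  simp only [h1, mul_add, Finset.sum_add_distrib, ← Finset.sum_mul, hw, one_mul]
  congr 1
  simp only [Finset.mul_sum]
  rw [Finset.sum_comm]
  exact Finset.sum_congr rfl fun y _ => Finset.sum_congr rfl fun i _ => by ring

/-- Let `I` be an ℓ-ideal of `M(P)` (`P ⊆ [0,1]ⁿ` a rational polyhedron), and suppose any
two elements of `M(P)` admit a common rational triangulation of `P` on which both are
affine. Then for every `f ∈ M(P)`: `f ∈ I` iff the zeroset of `f` contains the zeroset of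
some `g ∈ I`. -/
theorem mem_ideal_iff_zeroset {n : ℕ} (P : Set (Fin n → ℝ))
    (hP : IsRatPoly P) (hPc : P ⊆ Set.Icc 0 1)
    (I : Set ((Fin n → ℝ) → ℝ))
    (hIsub : ∀ f ∈ I, McNP P f)
    (hI0 : (0 : (Fin n → ℝ) → ℝ) ∈ I)
    (hIadd : ∀ f ∈ I, ∀ g ∈ I, f + g ∈ I)
    (hIneg : ∀ f ∈ I, -f ∈ I)
    (hIconv : ∀ f g, McNP P f → g ∈ I → (∀ x ∈ P, |f x| ≤ |g x|) → f ∈ I)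
    (htri : ∀ f g, McNP P f → McNP P g →
      ∃ Δ : Finset (Finset (Fin n → ℚ)),
        P = (⋃ T ∈ Δ, convexHull ℝ (toR '' (T : Set (Fin n → ℚ)))) ∧
        (∀ T ∈ Δ, AffOnSimplex f T) ∧ (∀ T ∈ Δ, AffOnSimplex g T)) :
    ∀ f, McNP P f → (f ∈ I ↔ ∃ g ∈ I, ∀ x ∈ P, g x = 0 → f x = 0) := by
  intro f hf
  constructor
  · intro hfI
    exact ⟨f, hfI, fun x _ h => h⟩
  · rintro ⟨g, hgI, hzero⟩
    classical
    have hg := hIsub g hgI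
    obtain ⟨Δ, hcover, hafff, haffg⟩ := htri f (fun x => |g x|) hf (mcnp_abs hg)
    -- the (finite) set of all vertices of the triangulation
    set V : Finset (Fin n → ℝ) := Δ.biUnion (fun T => T.image toR) with hV
    have hVP : ∀ y ∈ V, y ∈ P := by
      intro y hy
      obtain ⟨T, hT, hyT⟩ := Finset.mem_biUnion.1 hy
      obtain ⟨q, hq, rfl⟩ := Finset.mem_image.1 hyT
      have hmem : toR q ∈ convexHull ℝ (toR '' (T : Set (Fin n → ℚ))) :=
        subset_convexHull ℝ _ ⟨q, hq, rfl⟩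
      rw [hcover]
      exact Set.mem_biUnion hT hmem
    -- a uniform constant bounding |f| by K * |g| at all vertices
    set K : ℕ := V.sup (fun y => ⌈|f y| / |g y|⌉₊) with hK
    have hKb : ∀ y ∈ V, |f y| ≤ (K : ℝ) * |g y| := by
      intro y hy
      rcases eq_or_ne (g y) 0 with h0 | h0
      · have hf0 := hzero y (hVP y hy) h0
        simp [hf0, h0]
      · have hgpos : 0 < |g y| := abs_pos.2 h0
        have h1 : |f y| / |g y| ≤ (⌈|f y| / |g y|⌉₊ : ℝ) := Nat.le_ceil _
        have h2 : ((⌈|f y| / |g y|⌉₊ : ℕ) : ℝ) ≤ (K : ℝ) := by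
          exact_mod_cast Finset.le_sup (f := fun y => ⌈|f y| / |g y|⌉₊) hy
        have h3 : |f y| / |g y| ≤ (K : ℝ) := h1.trans h2
        rwa [div_le_iff₀ hgpos] at h3
    -- pointwise bound on P
    have hbound : ∀ x ∈ P, |f x| ≤ (K : ℝ) * |g x| := by
      intro x hx
      rw [hcover] at hx
      obtain ⟨T, hT, hxhull⟩ := Set.mem_iUnion₂.1 hx
      obtain ⟨cf, df, hcf⟩ := hafff T hT
      obtain ⟨cg, dg, hcg⟩ := haffg T hT
      have himg : toR '' (T : Set (Fin n → ℚ)) = ↑(T.image toR) :=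
        (Finset.coe_image).symm
      have hxT' := hxhull
      rw [himg, Finset.convexHull_eq] at hxT'
      obtain ⟨w, hw0, hw1, hwx⟩ := hxT'
      rw [Finset.centerMass_eq_of_sum_1 _ _ hw1] at hwx
      simp only [id_eq] at hwx
      have hvhull : ∀ y ∈ T.image toR, y ∈ convexHull ℝ (toR '' (T : Set (Fin n → ℚ))) := by
        intro y hy
        refine subset_convexHull ℝ _ ?_
        rw [himg]
        exact hy
      have hvV : ∀ y ∈ T.image toR, y ∈ V := by
        intro y hy
        exact Finset.mem_biUnion.2 ⟨T, hT, hy⟩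
      -- f and |g| at x as convex combinations of vertex values
      have hfx : f x = ∑ y ∈ T.image toR, w y * f y := by
        rw [hcf x hxhull, ← hwx, affine_comb cf df _ w hw1]
        exact Finset.sum_congr rfl fun y hy => by rw [← hcf y (hvhull y hy)]
      have hgx : |g x| = ∑ y ∈ T.image toR, w y * |g y| := by
        rw [show |g x| = (fun z => |g z|) x from rfl, hcg x hxhull, ← hwx,
          affine_comb cg dg _ w hw1]
        exact Finset.sum_congr rfl fun y hy => by rw [← hcg y (hvhull y hy)]
      calc |f x| = |∑ y ∈ T.image toR, w y * f y| := by rw [hfx]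
        _ ≤ ∑ y ∈ T.image toR, |w y * f y| := Finset.abs_sum_le_sum_abs _ _
        _ = ∑ y ∈ T.image toR, w y * |f y| := by
            exact Finset.sum_congr rfl fun y hy => by
              rw [abs_mul, abs_of_nonneg (hw0 y hy)]
        _ ≤ ∑ y ∈ T.image toR, w y * ((K : ℝ) * |g y|) := by
            refine Finset.sum_le_sum fun y hy => ?_
            exact mul_le_mul_of_nonneg_left (hKb y (hvV y hy)) (hw0 y hy)
        _ = (K : ℝ) * ∑ y ∈ T.image toR, w y * |g y| := by
            rw [Finset.mul_sum]
            exact Finset.sum_congr rfl fun y _ => by ring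
        _ = (K : ℝ) * |g x| := by rw [hgx]
    -- K • g ∈ I
    have hsmul : ∀ k : ℕ, (k • g) ∈ I := by
      intro k
      induction k with
      | zero => simpa using hI0
      | succ k ih =>
        have := hIadd _ ih _ hgI
        rwa [succ_nsmul]
    refine hIconv f (K • g) hf (hsmul K) ?_
    intro x hx
    have habs : |(K • g) x| = (K : ℝ) * |g x| := by
      simp [abs_mul]
    rw [habs]
    exact hbound x hx
end

section
/- Let 𝒫 and 𝒬 be nonempty filtering families of rational polyhedra in [0,1]ⁿ. If ⟨𝒫⟩ = ⟨𝒬⟩ then 𝒫 and 𝒬 are confluent, i.e., each minorizes the other: for every A ∈ 𝒬 there is B ∈ 𝒫 with B ⊆ A, and for every A ∈ 𝒫 there is B ∈ 𝒬 with B ⊆ A. Conversely, confluence implies ⟨𝒫⟩ = ⟨𝒬⟩. -/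
open scoped BigOperators

/-- The ideal `⟨𝒫⟩` attached to a family of rational polyhedra: the functions of
`M([0,1]ⁿ)` whose zeroset contains some member of the family. -/
def idealOf (n : ℕ) (Ps : Set (Set (Fin n → ℝ))) : Set ((Fin n → ℝ) → ℝ) :=
  {f | McNFun n f ∧ ∃ Q ∈ Ps, ∀ x ∈ Q, f x = 0}

/-- `Ps` minorizes `Qs`: every member of `Qs` contains a member of `Ps`. -/
def Minorizes {n : ℕ} (Ps Qs : Set (Set (Fin n → ℝ))) : Prop :=
  ∀ A ∈ Qs, ∃ B ∈ Ps, B ⊆ A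

namespace McNaux


def sat {m : ℕ} (L : Finset ((Fin m → ℚ) × ℚ)) (x : Fin m → ℝ) : Prop :=
  ∀ p ∈ L, (∑ i, (p.1 i : ℝ) * x i) ≤ (p.2 : ℝ)

lemma sum_snoc {m : ℕ} (a : Fin (m+1) → ℚ) (y : Fin m → ℝ) (t : ℝ) :
    (∑ i, (a i : ℝ) * (Fin.snoc y t : Fin (m+1) → ℝ) i)
      = (∑ i : Fin m, (a i.castSucc : ℝ) * y i) + (a (Fin.last m) : ℝ) * t := by
  rw [Fin.sum_univ_castSucc]
  simp

lemma fm_step {m : ℕ} (L : Finset ((Fin (m+1) → ℚ) × ℚ)) :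
    ∃ L' : Finset ((Fin m → ℚ) × ℚ), ∀ y : Fin m → ℝ,
      sat L' y ↔ ∃ t : ℝ, sat L (Fin.snoc y t) := by
  classical
  set c : ((Fin (m+1) → ℚ) × ℚ) → ℚ := fun p => p.1 (Fin.last m) with hc
  set red : ((Fin (m+1) → ℚ) × ℚ) → ((Fin m → ℚ) × ℚ) :=
    fun p => (fun i => p.1 i.castSucc, p.2) with hred
  set comb : ((Fin (m+1) → ℚ) × ℚ) → ((Fin (m+1) → ℚ) × ℚ) → ((Fin m → ℚ) × ℚ) :=
    fun p q => (fun i => (-(c q)) * p.1 i.castSucc + (c p) * q.1 i.castSucc,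
                (-(c q)) * p.2 + (c p) * q.2) with hcomb
  set L' : Finset ((Fin m → ℚ) × ℚ) := ((L.filter (fun p => c p = 0)).image red) ∪
      (((L.filter fun p => 0 < c p) ×ˢ (L.filter fun p => c p < 0)).image
        (fun pq => comb pq.1 pq.2)) with hL'
  refine ⟨L', fun y => ?_⟩
  set A : ((Fin (m+1) → ℚ) × ℚ) → ℝ := fun p => ∑ i : Fin m, (p.1 i.castSucc : ℝ) * y i with hA
  have hsumred : ∀ p, (∑ i, ((red p).1 i : ℝ) * y i) = A p := fun p => rfl
  have hsumcomb : ∀ p q, (∑ i, ((comb p q).1 i : ℝ) * y i)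
      = (-(c q : ℝ)) * A p + (c p : ℝ) * A q := by
    intro p q
    simp only [hcomb, hA, Finset.mul_sum]
    rw [← Finset.sum_add_distrib]
    refine Finset.sum_congr rfl fun i _ => ?_
    push_cast
    ring
  constructor
  · intro hs
    -- upper/lower bound comparison
    have hub : ∀ p ∈ L, 0 < c p → ∀ q ∈ L, c q < 0 →
        ((q.2 : ℝ) - A q) / (c q : ℝ) ≤ ((p.2 : ℝ) - A p) / (c p : ℝ) := by
      intro p hp hcp q hq hcq
      have hmem : comb p q ∈ L' := Finset.mem_union_right _ (Finset.mem_image.2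
        ⟨(p, q), Finset.mem_product.2 ⟨Finset.mem_filter.2 ⟨hp, hcp⟩, Finset.mem_filter.2 ⟨hq, hcq⟩⟩, rfl⟩)
      have h1 := hs _ hmem
      rw [hsumcomb] at h1
      have hcpR : (0 : ℝ) < (c p : ℝ) := by exact_mod_cast hcp
      have hcqR : (c q : ℝ) < 0 := by exact_mod_cast hcq
      have hkey : ((q.2 : ℝ) - A q) / (c q : ℝ) = (A q - (q.2 : ℝ)) / (-(c q : ℝ)) := by
        rw [div_neg, ← neg_div]; ring_nf
      rw [hkey, div_le_div_iff₀ (by linarith) hcpR]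
      have h1' : (-(c q : ℝ)) * A p + (c p : ℝ) * A q ≤ (-(c q : ℝ)) * (p.2 : ℝ) + (c p : ℝ) * (q.2 : ℝ) := by
        push_cast [hcomb] at h1 ⊢; linarith
      nlinarith
    by_cases hN : (L.filter fun p => c p < 0).Nonempty
    · obtain ⟨q0, hq0mem, hq0max⟩ := Finset.exists_max_image _
        (fun q => ((q.2 : ℝ) - A q) / (c q : ℝ)) hN
      rw [Finset.mem_filter] at hq0mem
      refine ⟨((q0.2 : ℝ) - A q0) / (c q0 : ℝ), fun p hp => ?_⟩
      rw [sum_snoc]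
      have hcq0R : (c q0 : ℝ) < 0 := by exact_mod_cast hq0mem.2
      have ht0 : (c q0 : ℝ) * (((q0.2 : ℝ) - A q0) / (c q0 : ℝ)) = (q0.2 : ℝ) - A q0 :=
        mul_div_cancel₀ _ (ne_of_lt hcq0R)
      rcases lt_trichotomy (c p) 0 with h | h | h
      · have hle := hq0max p (Finset.mem_filter.2 ⟨hp, h⟩)
        have hcpR : ((c p : ℚ) : ℝ) < 0 := by exact_mod_cast h
        have := mul_le_mul_of_nonpos_left hle (le_of_lt hcpR)
        rw [mul_div_cancel₀ _ (ne_of_lt hcpR)] at this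
        -- this : (c p) * t ≤ p.2 - A p
        linarith
      · have : ((c p : ℚ) : ℝ) = 0 := by exact_mod_cast h
        rw [this]
        have hmem : red p ∈ L' := Finset.mem_union_left _
          (Finset.mem_image.2 ⟨p, Finset.mem_filter.2 ⟨hp, h⟩, rfl⟩)
        have := hs _ hmem
        rw [hsumred] at this
        simpa using this
      · have hle := hub p hp h q0 hq0mem.1 hq0mem.2
        have hcpR : (0 : ℝ) < (c p : ℝ) := by exact_mod_cast h
        have := mul_le_mul_of_nonneg_left hle (le_of_lt hcpR)
        rw [mul_div_cancel₀ _ (ne_of_gt hcpR)] at this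
        linarith
    · by_cases hP : (L.filter fun p => 0 < c p).Nonempty
      · obtain ⟨p0, hp0mem, hp0min⟩ := Finset.exists_min_image _
          (fun p => ((p.2 : ℝ) - A p) / (c p : ℝ)) hP
        rw [Finset.mem_filter] at hp0mem
        refine ⟨((p0.2 : ℝ) - A p0) / (c p0 : ℝ), fun p hp => ?_⟩
        rw [sum_snoc]
        rcases lt_trichotomy (c p) 0 with h | h | h
        · exact absurd ⟨p, Finset.mem_filter.2 ⟨hp, h⟩⟩ hN
        · have : ((c p : ℚ) : ℝ) = 0 := by exact_mod_cast h
          rw [this]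
          have hmem : red p ∈ L' := Finset.mem_union_left _
            (Finset.mem_image.2 ⟨p, Finset.mem_filter.2 ⟨hp, h⟩, rfl⟩)
          have := hs _ hmem
          rw [hsumred] at this
          simpa using this
        · have hle := hp0min p (Finset.mem_filter.2 ⟨hp, h⟩)
          have hcpR : (0 : ℝ) < (c p : ℝ) := by exact_mod_cast h
          have := mul_le_mul_of_nonneg_left hle (le_of_lt hcpR)
          rw [mul_div_cancel₀ _ (ne_of_gt hcpR)] at this
          linarith
      · refine ⟨0, fun p hp => ?_⟩
        rw [sum_snoc]
        have h0 : c p = 0 := by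
          by_contra hne
          rcases lt_or_gt_of_ne hne with h | h
          · exact hN ⟨p, Finset.mem_filter.2 ⟨hp, h⟩⟩
          · exact hP ⟨p, Finset.mem_filter.2 ⟨hp, h⟩⟩
        have : ((c p : ℚ) : ℝ) = 0 := by exact_mod_cast h0
        rw [this]
        have hmem : red p ∈ L' := Finset.mem_union_left _
          (Finset.mem_image.2 ⟨p, Finset.mem_filter.2 ⟨hp, h0⟩, rfl⟩)
        have := hs _ hmem
        rw [hsumred] at this
        simpa using this
  · rintro ⟨t, ht⟩ r hr
    rcases Finset.mem_union.1 hr with h | h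
    · obtain ⟨p, hp, rfl⟩ := Finset.mem_image.1 h
      rw [Finset.mem_filter] at hp
      have := ht p hp.1
      rw [sum_snoc] at this
      have hz : ((c p : ℚ) : ℝ) = 0 := by exact_mod_cast hp.2
      rw [hsumred]
      show A p ≤ ((red p).2 : ℝ)
      rw [hz] at this
      simpa using this
    · obtain ⟨⟨p, q⟩, hpq, rfl⟩ := Finset.mem_image.1 h
      rw [Finset.mem_product, Finset.mem_filter, Finset.mem_filter] at hpq
      have h1 := ht p hpq.1.1
      have h2 := ht q hpq.2.1
      rw [sum_snoc] at h1 h2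
      have hcpR : (0 : ℝ) < (c p : ℝ) := by exact_mod_cast hpq.1.2
      have hcqR : (c q : ℝ) < 0 := by exact_mod_cast hpq.2.2
      rw [hsumcomb]
      show _ ≤ (((-(c q)) * p.2 + (c p) * q.2 : ℚ) : ℝ)
      push_cast
      nlinarith [mul_le_mul_of_nonneg_left h1 (by linarith : (0:ℝ) ≤ -(c q : ℝ)),
        mul_le_mul_of_nonneg_left h2 (le_of_lt hcpR)]


lemma fm_elim {m : ℕ} : ∀ (k : ℕ) (L : Finset ((Fin (m + k) → ℚ) × ℚ)),
    ∃ L' : Finset ((Fin m → ℚ) × ℚ), ∀ y : Fin m → ℝ,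
      sat L' y ↔ ∃ z : Fin k → ℝ, sat L (Fin.append y z) := by
  intro k
  induction k with
  | zero =>
    intro L
    refine ⟨L, fun y => ?_⟩
    have hap : ∀ z : Fin 0 → ℝ, Fin.append y z = y := by
      intro z; funext i; exact Fin.append_left y z i
    constructor
    · intro h; exact ⟨fun i => 0, by rw [hap]; exact h⟩
    · rintro ⟨z, hz⟩; rw [hap] at hz; exact hz
  | succ k ih =>
    intro L
    obtain ⟨L1, hL1⟩ := fm_step (m := m + k) L
    obtain ⟨L', hL'⟩ := ih L1
    refine ⟨L', fun y => ?_⟩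
    rw [hL']
    constructor
    · rintro ⟨z, hz⟩
      rw [hL1] at hz
      obtain ⟨t, ht⟩ := hz
      exact ⟨Fin.snoc z t, by rw [Fin.append_snoc]; exact ht⟩
    · rintro ⟨z, hz⟩
      refine ⟨Fin.init z, ?_⟩
      rw [hL1]
      refine ⟨z (Fin.last k), ?_⟩
      rw [← Fin.append_snoc, Fin.snoc_init_self]
      exact hz



lemma toR_injective {n : ℕ} : Function.Injective (toR (n := n)) := by
  intro a b h
  funext i
  have := congrFun h i
  simp only [toR] at this
  exact_mod_cast this

lemma mem_conv_iff {n : ℕ} (S : Finset (Fin n → ℚ)) (x : Fin n → ℝ) :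
    x ∈ convexHull ℝ (toR '' (S : Set (Fin n → ℚ))) ↔
      ∃ μ : Fin S.card → ℝ, (∀ i, 0 ≤ μ i) ∧ (∑ i, μ i = 1) ∧
        ∀ j, x j = ∑ i, μ i * ((((S.equivFin.symm i : S) : Fin n → ℚ)) j : ℝ) := by
  classical
  set v : Fin S.card → (Fin n → ℚ) := fun i => ((S.equivFin.symm i : S) : Fin n → ℚ) with hv
  have himg : toR '' (S : Set (Fin n → ℚ)) = ((S.image toR : Finset (Fin n → ℝ)) : Set (Fin n → ℝ)) := by
    rw [Finset.coe_image]
  constructor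
  · intro hx
    rw [himg, Finset.convexHull_eq] at hx
    obtain ⟨w, hw0, hw1, hwx⟩ := hx
    refine ⟨fun i => w (toR (v i)), fun i => hw0 _ (Finset.mem_image_of_mem _ (by simp [hv])), ?_, ?_⟩
    · have h1 : ∑ q ∈ S, w (toR q) = 1 := by
        rw [← Finset.sum_image (fun a _ b _ h => toR_injective h)]; exact hw1
      have h2 : ∑ i, w (toR (v i)) = ∑ q ∈ S, w (toR q) := by
        rw [← Finset.sum_coe_sort S (fun q => w (toR q))]
        exact Fintype.sum_equiv S.equivFin.symm _ _ (fun i => rfl)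
      rw [h2, h1]
    · intro j
      have hcm : (S.image toR).centerMass w id = ∑ y ∈ S.image toR, w y • y := by
        rw [Finset.centerMass_eq_of_sum_1 _ id hw1]; rfl
      have h1 : ∑ y ∈ S.image toR, w y • y = ∑ q ∈ S, w (toR q) • toR q :=
        Finset.sum_image (fun a _ b _ h => toR_injective h)
      have h2 : ∑ q ∈ S, w (toR q) • toR q = ∑ i, w (toR (v i)) • toR (v i) := by
        rw [← Finset.sum_coe_sort S (fun q => w (toR q) • toR q)]
        exact (Fintype.sum_equiv S.equivFin.symm _ _ (fun i => rfl)).symm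
      have hx2 : ∑ i, w (toR (v i)) • toR (v i) = x := by
        rw [← h2, ← h1, ← hcm]; exact hwx
      rw [← hx2, Finset.sum_apply]
      refine Finset.sum_congr rfl fun i _ => ?_
      simp [toR, smul_eq_mul, hv]
  · rintro ⟨μ, hμ0, hμ1, hμx⟩
    have hx : x = ∑ i, μ i • toR (v i) := by
      funext j
      rw [Finset.sum_apply]
      exact hμx j
    rw [hx]
    exact (convex_convexHull ℝ _).sum_mem (fun i _ => hμ0 i) hμ1
      (fun i _ => subset_convexHull ℝ _ ⟨v i, by simp [hv], rfl⟩)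


lemma sum_mul_append {n k : ℕ} (A : Fin n → ℚ) (B : Fin k → ℚ) (y : Fin n → ℝ) (z : Fin k → ℝ) :
    (∑ u, ((Fin.append A B) u : ℝ) * (Fin.append y z) u)
      = (∑ j, (A j : ℝ) * y j) + ∑ i, (B i : ℝ) * z i := by
  rw [Fin.sum_univ_add]
  simp

lemma exists_hrep {n : ℕ} (S : Finset (Fin n → ℚ)) :
    ∃ L' : Finset ((Fin n → ℚ) × ℚ), ∀ x : Fin n → ℝ,
      sat L' x ↔ x ∈ convexHull ℝ (toR '' (S : Set (Fin n → ℚ))) := by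
  classical
  set k := S.card with hk
  set v : Fin k → (Fin n → ℚ) := fun i => ((S.equivFin.symm i : S) : Fin n → ℚ) with hv
  set L : Finset ((Fin (n + k) → ℚ) × ℚ) :=
    ((Finset.univ.image fun i : Fin k =>
      ((Fin.append 0 (fun i' => if i' = i then (-1 : ℚ) else 0) : Fin (n+k) → ℚ), (0 : ℚ)))
    ∪ {((Fin.append 0 (fun _ => 1) : Fin (n+k) → ℚ), (1 : ℚ)),
       ((Fin.append 0 (fun _ => -1) : Fin (n+k) → ℚ), (-1 : ℚ))}
    ∪ (Finset.univ.image fun j : Fin n =>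
      ((Fin.append (fun j' => if j' = j then 1 else 0) (fun i => -(v i j)) : Fin (n+k) → ℚ), (0 : ℚ)))
    ∪ (Finset.univ.image fun j : Fin n =>
      ((Fin.append (fun j' => if j' = j then -1 else 0) (fun i => v i j) : Fin (n+k) → ℚ), (0 : ℚ)))) with hL
  have e0 : ∀ (y : Fin n → ℝ), (∑ j, (((0 : Fin n → ℚ) j : ℝ)) * y j) = 0 := by
    intro y; simp
  have e1 : ∀ (i : Fin k) (z : Fin k → ℝ),
      (∑ i', ((if i' = i then (-1 : ℚ) else 0 : ℚ) : ℝ) * z i') = -z i := by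
    intro i z
    rw [Finset.sum_eq_single i]
    · simp
    · intro b _ hb; simp [hb]
    · simp
  have e2 : ∀ (j : Fin n) (c : ℚ) (y : Fin n → ℝ),
      (∑ j', ((if j' = j then c else 0 : ℚ) : ℝ) * y j') = (c : ℝ) * y j := by
    intro j c y
    rw [Finset.sum_eq_single j]
    · simp
    · intro b _ hb; simp [hb]
    · simp
  have hchar : ∀ (y : Fin n → ℝ) (z : Fin k → ℝ),
      sat L (Fin.append y z) ↔
        ((∀ i, 0 ≤ z i) ∧ (∑ i, z i) = 1 ∧ ∀ j, y j = ∑ i, z i * ((v i j : ℚ) : ℝ)) := by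
    intro y z
    constructor
    · intro h
      have m1 : ∀ i : Fin k, 0 ≤ z i := by
        intro i
        have hmem : ((Fin.append 0 (fun i' => if i' = i then (-1 : ℚ) else 0) : Fin (n+k) → ℚ), (0 : ℚ)) ∈ L := by
          rw [hL]
          apply Finset.mem_union_left; apply Finset.mem_union_left; apply Finset.mem_union_left
          exact Finset.mem_image.2 ⟨i, Finset.mem_univ _, rfl⟩
        have := h _ hmem
        rw [sum_mul_append] at this
        rw [e0, e1] at this
        simp at this
        linarith
      have m2 : (∑ i, z i) = 1 := by
        have hmemA : ((Fin.append 0 (fun _ => 1) : Fin (n+k) → ℚ), (1 : ℚ)) ∈ L := by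
          rw [hL]
          apply Finset.mem_union_left; apply Finset.mem_union_left; apply Finset.mem_union_right
          exact Finset.mem_insert_self _ _
        have hmemB : ((Fin.append 0 (fun _ => -1) : Fin (n+k) → ℚ), (-1 : ℚ)) ∈ L := by
          rw [hL]
          apply Finset.mem_union_left; apply Finset.mem_union_left; apply Finset.mem_union_right
          exact Finset.mem_insert_of_mem (Finset.mem_singleton_self _)
        have hA := h _ hmemA
        have hB := h _ hmemB
        rw [sum_mul_append, e0] at hA hB
        push_cast at hA hB
        simp only [one_mul, neg_mul, neg_one_mul] at hA hB
        rw [Finset.sum_neg_distrib] at hB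
        push_cast at hA hB
        linarith
      refine ⟨m1, m2, fun j => ?_⟩
      have hmemA : ((Fin.append (fun j' => if j' = j then 1 else 0) (fun i => -(v i j)) : Fin (n+k) → ℚ), (0 : ℚ)) ∈ L := by
        rw [hL]
        apply Finset.mem_union_left; apply Finset.mem_union_right
        exact Finset.mem_image.2 ⟨j, Finset.mem_univ _, rfl⟩
      have hmemB : ((Fin.append (fun j' => if j' = j then -1 else 0) (fun i => v i j) : Fin (n+k) → ℚ), (0 : ℚ)) ∈ L := by
        rw [hL]
        apply Finset.mem_union_right
        exact Finset.mem_image.2 ⟨j, Finset.mem_univ _, rfl⟩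
      have hA := h _ hmemA
      have hB := h _ hmemB
      rw [sum_mul_append, e2] at hA hB
      have hsA : (∑ i, ((-(v i j) : ℚ) : ℝ) * z i) = -∑ i, z i * ((v i j : ℚ) : ℝ) := by
        rw [← Finset.sum_neg_distrib]
        refine Finset.sum_congr rfl fun i _ => ?_
        push_cast; ring
      have hsB : (∑ i, ((v i j : ℚ) : ℝ) * z i) = ∑ i, z i * ((v i j : ℚ) : ℝ) := by
        refine Finset.sum_congr rfl fun i _ => ?_
        ring
      rw [hsA] at hA
      rw [hsB] at hB
      push_cast at hA hB
      linarith
    · rintro ⟨m1, m2, m3⟩ p hp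
      rw [hL] at hp
      rcases Finset.mem_union.1 hp with hp | hp
      · rcases Finset.mem_union.1 hp with hp | hp
        · rcases Finset.mem_union.1 hp with hp | hp
          · obtain ⟨i, _, rfl⟩ := Finset.mem_image.1 hp
            rw [sum_mul_append, e0, e1]
            have := m1 i
            simp
            linarith
          · rcases Finset.mem_insert.1 hp with rfl | hp
            · rw [sum_mul_append, e0]
              push_cast
              simp only [one_mul]
              rw [m2]
              norm_num
            · rw [Finset.mem_singleton.1 hp]
              rw [sum_mul_append, e0]
              push_cast
              simp only [neg_one_mul]
              rw [Finset.sum_neg_distrib, m2]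
              norm_num
        · obtain ⟨j, _, rfl⟩ := Finset.mem_image.1 hp
          rw [sum_mul_append, e2]
          have hsA : (∑ i, ((-(v i j) : ℚ) : ℝ) * z i) = -∑ i, z i * ((v i j : ℚ) : ℝ) := by
            rw [← Finset.sum_neg_distrib]
            refine Finset.sum_congr rfl fun i _ => ?_
            push_cast; ring
          rw [hsA, ← m3 j]
          push_cast
          norm_num
      · obtain ⟨j, _, rfl⟩ := Finset.mem_image.1 hp
        rw [sum_mul_append, e2]
        have hsB : (∑ i, ((v i j : ℚ) : ℝ) * z i) = ∑ i, z i * ((v i j : ℚ) : ℝ) := by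
          refine Finset.sum_congr rfl fun i _ => ?_
          ring
        rw [hsB, ← m3 j]
        push_cast
        norm_num
  obtain ⟨L', hLp⟩ := fm_elim k L
  refine ⟨L', fun x => ?_⟩
  rw [hLp, mem_conv_iff]
  exact exists_congr fun z => hchar x z

lemma int_of_den_dvd {q : ℚ} {D : ℕ} (h : q.den ∣ D) : ∃ m : ℤ, (m : ℚ) = (D : ℚ) * q := by
  obtain ⟨c, hc⟩ := h
  refine ⟨(c : ℤ) * q.num, ?_⟩
  have h0 : ((q.den : ℚ)) ≠ 0 := by exact_mod_cast q.den_nz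
  have hd : ((q.den : ℚ)) * q = (q.num : ℚ) := by
    rw [mul_comm]
    nth_rewrite 1 [← Rat.num_div_den q]
    field_simp
  rw [hc]
  push_cast
  rw [mul_comm (q.den : ℚ) (c : ℚ), mul_assoc, hd]

lemma exists_int_scale {n : ℕ} (a : Fin n → ℚ) (b : ℚ) :
    ∃ (A : Fin n → ℤ) (B : ℤ) (d : ℚ), 0 < d ∧ (∀ i, (A i : ℚ) = d * a i) ∧ ((B : ℚ) = d * (-b)) := by
  classical
  set D : ℕ := (-b).den * ∏ i, (a i).den with hD
  have hdvd : ∀ i, (a i).den ∣ D := fun i =>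
    Dvd.dvd.mul_left (Finset.dvd_prod_of_mem _ (Finset.mem_univ i)) _
  have hbdvd : (-b).den ∣ D := Dvd.dvd.mul_right dvd_rfl _
  have hA := fun i => int_of_den_dvd (hdvd i)
  choose A hAi using hA
  obtain ⟨B, hB⟩ := int_of_den_dvd hbdvd
  refine ⟨A, B, (D : ℚ), ?_, fun i => hAi i, hB⟩
  have : 0 < D := Nat.mul_pos (-b).den_pos (Finset.prod_pos fun i _ => (a i).den_pos)
  exact_mod_cast this

lemma exists_mcn {n : ℕ} (A : Set (Fin n → ℝ)) (hA : IsRatPoly A) :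
    ∃ f : (Fin n → ℝ) → ℝ, McNFun n f ∧ {x | f x = 0} = A := by
  classical
  obtain ⟨F, rfl⟩ := hA
  rcases F.eq_empty_or_nonempty with rfl | hF
  · refine ⟨fun _ => 1, ⟨continuousOn_const, ⟨{(0, 1)}, fun x _ =>
      ⟨(0, 1), Finset.mem_singleton_self _, by simp⟩⟩⟩, ?_⟩
    simp
  · choose Lrep hLrep using fun T : Finset (Fin n → ℚ) => exists_hrep T
    choose IA IB dsc hd hIA hIB using fun p : (Fin n → ℚ) × ℚ => exists_int_scale p.1 p.2
    set lin : ((Fin n → ℚ) × ℚ) → (Fin n → ℝ) → ℝ :=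
      fun p x => (∑ i, (IA p i : ℝ) * x i) + (IB p : ℝ) with hlin
    set g : Finset (Fin n → ℚ) → (Fin n → ℝ) → ℝ :=
      fun T x => ∑ p ∈ Lrep T, max 0 (lin p x) with hg
    have hlinval : ∀ p x, lin p x = (dsc p : ℝ) * ((∑ i, (p.1 i : ℝ) * x i) - (p.2 : ℝ)) := by
      intro p x
      have h1 : ∀ i, ((IA p i : ℤ) : ℝ) = (dsc p : ℝ) * ((p.1 i : ℝ)) := by
        intro i
        have h0 := hIA p i
        have : ((IA p i : ℚ) : ℝ) = ((dsc p * p.1 i : ℚ) : ℝ) := by rw [h0]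
        push_cast at this ⊢
        exact this
      have h2 : ((IB p : ℤ) : ℝ) = (dsc p : ℝ) * (-(p.2 : ℝ)) := by
        have h0 := hIB p
        have h3 : ((IB p : ℚ) : ℝ) = ((dsc p * (-p.2) : ℚ) : ℝ) := by rw [h0]
        push_cast at h3 ⊢
        exact h3
      simp only [hlin]
      rw [mul_sub, Finset.mul_sum]
      have h4 : ∀ i, (IA p i : ℝ) * x i = (dsc p : ℝ) * ((p.1 i : ℝ) * x i) := by
        intro i; rw [h1]; ring
      rw [Finset.sum_congr rfl (fun i _ => h4 i), h2]
      ring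
    have hdpos : ∀ p, (0 : ℝ) < (dsc p : ℝ) := fun p => by exact_mod_cast hd p
    have hgzero : ∀ T x, (g T x = 0 ↔ x ∈ convexHull ℝ (toR '' (T : Set (Fin n → ℚ)))) := by
      intro T x
      rw [← hLrep T x]
      simp only [hg]
      rw [Finset.sum_eq_zero_iff_of_nonneg (fun p _ => le_max_left _ _)]
      constructor
      · intro h p hp
        have h1 := h p hp
        have hle : lin p x ≤ 0 := by
          by_contra hlt
          push_neg at hlt
          rw [max_eq_right (le_of_lt hlt)] at h1
          exact (ne_of_gt hlt) h1
        rw [hlinval] at hle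
        nlinarith [hdpos p]
      · intro h p hp
        have h1 := h p hp
        have hle : lin p x ≤ 0 := by
          rw [hlinval]
          nlinarith [hdpos p]
        exact max_eq_left hle
    have hlincont : ∀ p, Continuous (lin p) := by
      intro p
      apply Continuous.add
      · exact continuous_finset_sum _ fun i _ => continuous_const.mul (continuous_apply i)
      · exact continuous_const
    have hgcont : ∀ T, Continuous (g T) :=
      fun T => continuous_finset_sum _ fun p _ => continuous_const.max (hlincont p)
    have hgnonneg : ∀ T x, 0 ≤ g T x :=
      fun T x => Finset.sum_nonneg fun p _ => le_max_left _ _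
    refine ⟨fun x => F.inf' hF (fun T => g T x), ⟨?_, ?_⟩, ?_⟩
    · exact (Continuous.finset_inf'_apply hF fun T _ => hgcont T).continuousOn
    · refine ⟨F.biUnion (fun T => (Lrep T).powerset.image
        (fun J => ((fun i => ∑ p ∈ J, IA p i), ∑ p ∈ J, IB p))), fun x _ => ?_⟩
      obtain ⟨T₀, hT₀, hfx⟩ := Finset.exists_mem_eq_inf' hF (fun T => g T x)
      set J := (Lrep T₀).filter (fun p => 0 ≤ lin p x) with hJ
      refine ⟨((fun i => ∑ p ∈ J, IA p i), ∑ p ∈ J, IB p), ?_, ?_⟩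
      · exact Finset.mem_biUnion.2 ⟨T₀, hT₀, Finset.mem_image.2
          ⟨J, Finset.mem_powerset.2 (Finset.filter_subset _ _), rfl⟩⟩
      · show F.inf' hF (fun T => g T x) = _
        rw [hfx]
        show (∑ p ∈ Lrep T₀, max 0 (lin p x)) = _
        calc ∑ p ∈ Lrep T₀, max 0 (lin p x)
            = ∑ p ∈ Lrep T₀, (if 0 ≤ lin p x then lin p x else 0) := by
              exact Finset.sum_congr rfl fun p _ => max_def 0 (lin p x)
          _ = ∑ p ∈ J, lin p x := (Finset.sum_filter _ _).symm
          _ = (∑ p ∈ J, ∑ i, (IA p i : ℝ) * x i) + ∑ p ∈ J, (IB p : ℝ) := by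
              simp only [hlin]
              rw [Finset.sum_add_distrib]
          _ = (∑ i, ∑ p ∈ J, (IA p i : ℝ) * x i) + ∑ p ∈ J, (IB p : ℝ) := by
              rw [Finset.sum_comm]
          _ = (∑ i, ((∑ p ∈ J, IA p i : ℤ) : ℝ) * x i) + ((∑ p ∈ J, IB p : ℤ) : ℝ) := by
              push_cast
              refine congrArg₂ _ (Finset.sum_congr rfl fun i _ => ?_) rfl
              rw [Finset.sum_mul]
    · ext x
      simp only [Set.mem_setOf_eq, Set.mem_iUnion]
      constructor
      · intro h0
        obtain ⟨T₀, hT₀, hfx⟩ := Finset.exists_mem_eq_inf' hF (fun T => g T x)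
        have h0' : F.inf' hF (fun T => g T x) = 0 := h0
        rw [hfx] at h0'
        exact ⟨T₀, hT₀, (hgzero T₀ x).1 h0'⟩
      · rintro ⟨T, hT, hx⟩
        have h1 : F.inf' hF (fun T => g T x) ≤ g T x := Finset.inf'_le _ hT
        have h2 : (0 : ℝ) ≤ F.inf' hF (fun T => g T x) :=
          Finset.le_inf' hF _ fun T' _ => hgnonneg T' x
        have h3 := (hgzero T x).2 hx
        show F.inf' hF (fun T => g T x) = 0
        rw [h3] at h1
        linarith

end McNaux

/-- For nonempty filtering families `𝒫, 𝒬` of rational polyhedra in `[0,1]ⁿ`: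
`⟨𝒫⟩ = ⟨𝒬⟩` if and only if `𝒫` and `𝒬` are confluent (each minorizes the other). -/
theorem idealOf_eq_iff_confluent {n : ℕ} (Ps Qs : Set (Set (Fin n → ℝ)))
    (hPne : Ps.Nonempty) (hQne : Qs.Nonempty)
    (hPpoly : ∀ Q ∈ Ps, IsRatPoly Q ∧ Q ⊆ Set.Icc 0 1)
    (hQpoly : ∀ Q ∈ Qs, IsRatPoly Q ∧ Q ⊆ Set.Icc 0 1)
    (hPfil : ∀ X ∈ Ps, ∀ Y ∈ Ps, ∃ Z ∈ Ps, Z ⊆ X ∩ Y)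
    (hQfil : ∀ X ∈ Qs, ∀ Y ∈ Qs, ∃ Z ∈ Qs, Z ⊆ X ∩ Y) :
    idealOf n Ps = idealOf n Qs ↔ (Minorizes Ps Qs ∧ Minorizes Qs Ps) := by
  constructor
  · intro h
    constructor
    · intro A hA
      obtain ⟨f, hmf, hz⟩ := McNaux.exists_mcn A (hQpoly A hA).1
      have hfQ : f ∈ idealOf n Qs :=
        ⟨hmf, A, hA, fun x hx => by rw [← hz] at hx; exact hx⟩
      have hfP : f ∈ idealOf n Ps := by rw [h]; exact hfQ
      obtain ⟨_, B, hB, hfB⟩ := hfP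
      refine ⟨B, hB, fun x hx => ?_⟩
      rw [← hz]
      exact hfB x hx
    · intro A hA
      obtain ⟨f, hmf, hz⟩ := McNaux.exists_mcn A (hPpoly A hA).1
      have hfP : f ∈ idealOf n Ps :=
        ⟨hmf, A, hA, fun x hx => by rw [← hz] at hx; exact hx⟩
      have hfQ : f ∈ idealOf n Qs := by rw [← h]; exact hfP
      obtain ⟨_, B, hB, hfB⟩ := hfQ
      refine ⟨B, hB, fun x hx => ?_⟩
      rw [← hz]
      exact hfB x hx
  · rintro ⟨h1, h2⟩
    ext f
    simp only [idealOf, Set.mem_setOf_eq]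
    constructor
    · rintro ⟨hm, Q, hQ, h0⟩
      obtain ⟨B, hB, hBQ⟩ := h2 Q hQ
      exact ⟨hm, B, hB, fun x hx => h0 x (hBQ hx)⟩
    · rintro ⟨hm, Q, hQ, h0⟩
      obtain ⟨B, hB, hBQ⟩ := h1 Q hQ
      exact ⟨hm, B, hB, fun x hx => h0 x (hBQ hx)⟩
end
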